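/- There exists an absolute constant c ≥ 1 with the following property. Let q(x₀,x₁,x₂,x₃) = a₀x₀² + a₁x₁² + a₂x₂² + a₃x₃² and r(x₀,x₁,x₂,x₃) = b₀x₀² + b₁x₁² + b₂x₂² + b₃x₃² be a primitive pair of diagonal quadratic forms with integer coefficients such that d_ij = a_i b_j − a_j b_i ≠ 0 for all 0 ≤ i < j ≤ 3, let B ≥ 3 be real with (max_i |a_i|)·(max_i |b_i|) ≤ B^{160}, and let k ≥ 1 be an integer. Then there exists a prime p not dividing 2·∏_{0≤i<j≤3} d_ij such that 2·B^{4k/(8k−1)} / H(C)^{(4k²−4k+1)/(4k(8k−1))} < p ≤ c·( B^{4k/(8k−1)} / H(C)^{(4k²−4k+1)/(4k(8k−1))} + 1 + log B ). -/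

import Mathlib

open scoped BigOperators

/-- `d_{ij} = a_i b_j - a_j b_i`. -/
def dd (a b : Fin 4 → ℤ) (i j : Fin 4) : ℤ := a i * b j - a j * b i

/-- gcd of the `d_{ij}` over pairs `i < j`. -/
def gcdD (a b : Fin 4 → ℤ) : ℤ :=
  (Finset.univ.filter fun p : Fin 4 × Fin 4 => p.1 < p.2).gcd fun p => dd a b p.1 p.2

/-- maximum of `|d_{ij}|` over pairs `i < j`. -/
def maxD (a b : Fin 4 → ℤ) : ℤ :=
  (Finset.univ.filter fun p : Fin 4 × Fin 4 => p.1 < p.2).sup' (by decide)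
    fun p => |dd a b p.1 p.2|

/-- The height `H(C)` of the curve defined by the pair of diagonal quadratic forms. -/
def HC (a b : Fin 4 → ℤ) : ℤ := maxD a b / gcdD a b

/-- The pair `(q, r)` is primitive: `gcd_{0 ≤ i < j ≤ 3}(d_ij) = 1`. -/
def PrimPair (a b : Fin 4 → ℤ) : Prop := gcdD a b = 1

open Finset Filter Asymptotics

lemma key_nat (m : ℕ) (hm : 0 < m) :
    4 ^ m ≤ (2 * m) ^ (Nat.sqrt (2 * m) + 2) * primorial (2 * m) := by
  have h1 : 4 ^ m ≤ 2 * m * Nat.centralBinom m :=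
    Nat.four_pow_le_two_mul_self_mul_centralBinom m hm
  have h2 : Nat.centralBinom m ≤ primorial (2 * m) * (2 * m) ^ (Nat.sqrt (2 * m) + 1) := by
    have hfact : (∏ p ∈ Finset.range (2 * m + 1),
        p ^ (Nat.centralBinom m).factorization p) = Nat.centralBinom m := by
      rw [Nat.centralBinom]
      exact Nat.prod_pow_factorization_choose (2 * m) m (by omega)
    rw [← hfact]
    set s := Nat.sqrt (2 * m) with hs
    have hb : ∀ p ∈ Finset.range (2 * m + 1),
        p ^ (Nat.centralBinom m).factorization p ≤
          if p.Prime then (if s < p then p else 2 * m) else 1 := by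
      intro p _
      by_cases hp : p.Prime
      · simp only [hp, if_true]
        by_cases hps : s < p
        · simp only [hps, if_true]
          have hle1 : (Nat.centralBinom m).factorization p ≤ 1 := by
            apply Nat.factorization_choose_le_one
            have := Nat.sqrt_lt.mp hps
            nlinarith
          calc p ^ (Nat.centralBinom m).factorization p ≤ p ^ 1 :=
                Nat.pow_le_pow_right hp.pos hle1
            _ = p := pow_one p
        · simp only [hps, if_false]
          rw [Nat.centralBinom]
          exact Nat.pow_factorization_choose_le (by omega)
      · rw [Nat.factorization_eq_zero_of_not_prime _ hp, pow_zero]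
        simp [hp]
    calc (∏ p ∈ Finset.range (2 * m + 1), p ^ (Nat.centralBinom m).factorization p)
        ≤ ∏ p ∈ Finset.range (2 * m + 1),
            (if p.Prime then (if s < p then p else 2 * m) else 1) :=
          Finset.prod_le_prod' hb
      _ = ∏ p ∈ (Finset.range (2 * m + 1)).filter Nat.Prime,
            (if s < p then p else 2 * m) := by
          rw [Finset.prod_filter]
      _ = (∏ p ∈ ((Finset.range (2 * m + 1)).filter Nat.Prime).filter (fun p => s < p),
            (if s < p then p else 2 * m)) *
          (∏ p ∈ ((Finset.range (2 * m + 1)).filter Nat.Prime).filter (fun p => ¬ s < p),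
            (if s < p then p else 2 * m)) :=
          (Finset.prod_filter_mul_prod_filter_not _ _ _).symm
      _ ≤ primorial (2 * m) * (2 * m) ^ (s + 1) := by
          gcongr ?_ * ?_
          · calc (∏ p ∈ ((Finset.range (2 * m + 1)).filter Nat.Prime).filter (fun p => s < p),
                (if s < p then p else 2 * m))
                = ∏ p ∈ ((Finset.range (2 * m + 1)).filter Nat.Prime).filter (fun p => s < p), p := by
                  apply Finset.prod_congr rfl
                  intro p hp
                  rw [if_pos (Finset.mem_filter.mp hp).2]
              _ ≤ ∏ p ∈ (Finset.range (2 * m + 1)).filter Nat.Prime, p := by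
                  apply Finset.prod_le_prod_of_subset_of_one_le' (Finset.filter_subset _ _)
                  intro i hi _
                  exact (Finset.mem_filter.mp hi).2.one_lt.le
              _ = primorial (2 * m) := rfl
          · calc (∏ p ∈ ((Finset.range (2 * m + 1)).filter Nat.Prime).filter (fun p => ¬ s < p),
                (if s < p then p else 2 * m))
                = ∏ _p ∈ ((Finset.range (2 * m + 1)).filter Nat.Prime).filter (fun p => ¬ s < p),
                    (2 * m) := by
                  apply Finset.prod_congr rfl
                  intro p hp
                  rw [if_neg (Finset.mem_filter.mp hp).2]
              _ = (2 * m) ^ (((Finset.range (2 * m + 1)).filter Nat.Prime).filter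
                    (fun p => ¬ s < p)).card := Finset.prod_const _
              _ ≤ (2 * m) ^ (s + 1) := by
                  apply Nat.pow_le_pow_right (by omega)
                  calc (((Finset.range (2 * m + 1)).filter Nat.Prime).filter
                      (fun p => ¬ s < p)).card
                      ≤ (Finset.range (s + 1)).card := by
                        apply Finset.card_le_card
                        intro p hp
                        simp only [Finset.mem_filter, not_lt] at hp
                        exact Finset.mem_range.mpr (by omega)
                    _ = s + 1 := Finset.card_range _
  calc 4 ^ m ≤ 2 * m * Nat.centralBinom m := h1
    _ ≤ 2 * m * (primorial (2 * m) * (2 * m) ^ (Nat.sqrt (2 * m) + 1)) := by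
        exact Nat.mul_le_mul_left _ h2
    _ = (2 * m) ^ (Nat.sqrt (2 * m) + 2) * primorial (2 * m) := by ring



lemma sqrtlog_little : ∀ ε : ℝ, 0 < ε → ∀ᶠ (y : ℝ) in atTop,
    (Real.sqrt y + 2) * Real.log y ≤ ε * y := by
  intro ε hε
  have h1 : (fun y : ℝ => Real.sqrt y * Real.log y) =o[atTop] (fun y : ℝ => y) := by
    have hA : (fun y : ℝ => Real.sqrt y * Real.log y) =o[atTop]
        (fun y : ℝ => Real.sqrt y * y ^ ((1:ℝ)/2)) :=
      (isBigO_refl (fun y : ℝ => Real.sqrt y) atTop).mul_isLittleO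
        (isLittleO_log_rpow_atTop (by norm_num))
    refine hA.trans_eventuallyEq ?_
    filter_upwards [eventually_gt_atTop (0:ℝ)] with y hy
    rw [Real.sqrt_eq_rpow, ← Real.rpow_add hy]
    norm_num
  have h2 : (fun y : ℝ => 2 * Real.log y) =o[atTop] (fun y : ℝ => y) :=
    (Real.isLittleO_log_id_atTop.const_mul_left 2)
  have h3 := h1.add h2
  have h4 := (h3.def hε)
  filter_upwards [h4, eventually_ge_atTop (1:ℝ)] with y hy hy1
  have heq : (Real.sqrt y + 2) * Real.log y = Real.sqrt y * Real.log y + 2 * Real.log y := by ring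
  rw [heq]
  calc Real.sqrt y * Real.log y + 2 * Real.log y
      ≤ ‖Real.sqrt y * Real.log y + 2 * Real.log y‖ := Real.le_norm_self _
    _ ≤ ε * ‖y‖ := hy
    _ = ε * y := by rw [Real.norm_of_nonneg (by linarith)]

lemma log_four_gt : (3:ℝ)/5 < Real.log 4 := by
  have h := Real.log_two_gt_d9
  have h4 : Real.log 4 = 2 * Real.log 2 := by
    rw [show (4:ℝ) = 2 ^ 2 by norm_num, Real.log_pow]
    push_cast; ring
  rw [h4]; linarith

lemma theta_lower_ev : ∀ᶠ m : ℕ in atTop, (m : ℝ) * (3/5) ≤ Real.log (primorial (2 * m)) := by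
  have hε : (0:ℝ) < (Real.log 4 - 3/5) / 2 := by
    have := log_four_gt; linarith
  have hev := sqrtlog_little _ hε
  have htend : Tendsto (fun m : ℕ => (2 * m : ℝ)) atTop atTop := by
    apply Tendsto.const_mul_atTop (by norm_num : (0:ℝ) < 2)
    exact tendsto_natCast_atTop_atTop
  filter_upwards [htend.eventually hev, eventually_ge_atTop 1] with m hm hm1
  have hkey := key_nat m hm1
  have hP : (0:ℝ) < (primorial (2 * m) : ℝ) := by exact_mod_cast primorial_pos (2 * m)
  have h2mpos : (0:ℝ) < ((2 * m : ℕ) : ℝ) := by exact_mod_cast Nat.pos_of_ne_zero (by omega)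
  have hcast : (4:ℝ) ^ m ≤ ((2 * m : ℕ) : ℝ) ^ (Nat.sqrt (2 * m) + 2) * (primorial (2 * m) : ℝ) := by
    exact_mod_cast hkey
  have hlog0 := Real.log_le_log (by positivity) hcast
  rw [Real.log_mul (by positivity) (ne_of_gt hP), Real.log_pow, Real.log_pow] at hlog0
  -- hlog0 : m * log 4 ≤ (sqrt(2m)+2) * log (2m) + log (primorial (2m))
  have hsq : (Nat.sqrt (2 * m) : ℝ) ≤ Real.sqrt ((2 * m : ℕ) : ℝ) := Real.nat_sqrt_le_real_sqrt
  have hlogpos : 0 ≤ Real.log ((2 * m : ℕ) : ℝ) :=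
    Real.log_nonneg (by exact_mod_cast Nat.one_le_iff_ne_zero.mpr (by omega))
  have h2meq : ((2 * m : ℕ) : ℝ) = 2 * (m : ℝ) := by push_cast; ring
  have hb : ((Nat.sqrt (2 * m) + 2 : ℕ) : ℝ) * Real.log ((2 * m : ℕ) : ℝ) ≤
      (Real.log 4 - 3/5) / 2 * (2 * (m:ℝ)) := by
    calc ((Nat.sqrt (2 * m) + 2 : ℕ) : ℝ) * Real.log ((2 * m : ℕ) : ℝ)
        ≤ (Real.sqrt ((2 * m : ℕ) : ℝ) + 2) * Real.log ((2 * m : ℕ) : ℝ) := by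
          apply mul_le_mul_of_nonneg_right _ hlogpos
          push_cast
          rw [← h2meq] at *
          push_cast at hsq ⊢
          linarith
      _ ≤ (Real.log 4 - 3/5) / 2 * (2 * (m:ℝ)) := by
          rw [h2meq]
          exact hm
  have : (m:ℝ) * Real.log 4 ≤ (Real.log 4 - 3/5) / 2 * (2 * (m:ℝ)) +
      Real.log (primorial (2 * m)) := le_trans hlog0 (by linarith)
  nlinarith [this]

lemma theta_lower : ∃ n₀ : ℕ, ∀ n : ℕ, n₀ ≤ n → (n : ℝ) / 5 ≤ Real.log (primorial n) := by
  obtain ⟨M, hM⟩ := eventually_atTop.mp theta_lower_ev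
  refine ⟨2 * M + 3, fun n hn => ?_⟩
  have hm : M ≤ n / 2 := by omega
  have hmono : primorial (2 * (n / 2)) ≤ primorial n :=
    primorial_monotone (by omega)
  have h1 : ((n / 2 : ℕ) : ℝ) * (3/5) ≤ Real.log (primorial (2 * (n / 2))) := hM _ hm
  have h2 : Real.log (primorial (2 * (n / 2))) ≤ Real.log (primorial n) := by
    apply Real.log_le_log
    · exact_mod_cast primorial_pos _
    · exact_mod_cast hmono
  have h3 : (n : ℝ) ≤ 2 * ((n / 2 : ℕ) : ℝ) + 1 := by
    have : n ≤ 2 * (n / 2) + 1 := by omega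
    exact_mod_cast this
  have h4 : (3:ℝ) ≤ (n : ℝ) := by exact_mod_cast (by omega : 3 ≤ n)
  linarith


/-- There is an absolute constant `c ≥ 1` such that: for every primitive
pair of diagonal quadratic forms with all `d_ij ≠ 0`, every `B ≥ 3` with
`(max|a_i|)(max|b_i|) ≤ B^160` and every `k ≥ 1`, there is a prime `p` of good reduction
(i.e. `p ∤ 2·∏_{i<j} d_ij`) with
`2·B^{4k/(8k-1)}/H(C)^{(4k²-4k+1)/(4k(8k-1))} < p ≤ c·(B^{4k/(8k-1)}/H(C)^{(4k²-4k+1)/(4k(8k-1))} + 1 + log B)`. -/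
theorem statement10 :
    ∃ c : ℝ, 1 ≤ c ∧
      ∀ a b : Fin 4 → ℤ, PrimPair a b →
        (∀ i j : Fin 4, i < j → dd a b i j ≠ 0) →
        ∀ B : ℝ, 3 ≤ B →
          ((Finset.univ.sup fun i => (a i).natAbs : ℕ) : ℝ) *
              ((Finset.univ.sup fun i => (b i).natAbs : ℕ) : ℝ) ≤ B ^ (160 : ℕ) →
          ∀ k : ℕ, 1 ≤ k →
            ∃ p : ℕ, p.Prime ∧
              ¬ (p : ℤ) ∣ 2 * ∏ pr ∈ Finset.univ.filter
                  fun pr : Fin 4 × Fin 4 => pr.1 < pr.2, dd a b pr.1 pr.2 ∧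
              2 * B ^ ((4 * (k : ℝ)) / (8 * (k : ℝ) - 1)) /
                  (HC a b : ℝ) ^ ((4 * (k : ℝ) ^ 2 - 4 * (k : ℝ) + 1) /
                    (4 * (k : ℝ) * (8 * (k : ℝ) - 1))) < (p : ℝ) ∧
              (p : ℝ) ≤ c * (B ^ ((4 * (k : ℝ)) / (8 * (k : ℝ) - 1)) /
                  (HC a b : ℝ) ^ ((4 * (k : ℝ) ^ 2 - 4 * (k : ℝ) + 1) /
                    (4 * (k : ℝ) * (8 * (k : ℝ) - 1))) + 1 + Real.log B) := by
  obtain ⟨n₀, hθ⟩ := theta_lower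
  refine ⟨max ((n₀ : ℝ) + 1) 4900, le_trans (by norm_num) (le_max_right _ _), ?_⟩
  set c : ℝ := max ((n₀ : ℝ) + 1) 4900 with hc
  have hc49 : (4900 : ℝ) ≤ c := le_max_right _ _
  have hcn0 : (n₀ : ℝ) + 1 ≤ c := le_max_left _ _
  intro a b hprim hd B hB hAB k hk
  -- basic facts about N
  set N : ℤ := 2 * ∏ pr ∈ Finset.univ.filter
      fun pr : Fin 4 × Fin 4 => pr.1 < pr.2, dd a b pr.1 pr.2 with hNdef
  have hprodne : ∀ pr ∈ Finset.univ.filter fun pr : Fin 4 × Fin 4 => pr.1 < pr.2,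
      dd a b pr.1 pr.2 ≠ 0 := by
    intro pr hpr
    exact hd pr.1 pr.2 (Finset.mem_filter.mp hpr).2
  have hNne : N ≠ 0 := by
    rw [hNdef]
    exact mul_ne_zero two_ne_zero (Finset.prod_ne_zero_iff.mpr hprodne)
  -- HC ≥ 1
  have hHC : HC a b = maxD a b := by
    rw [HC, hprim]; simp
  have hmaxD1 : 1 ≤ maxD a b := by
    have hmem : ((0 : Fin 4), (1 : Fin 4)) ∈
        Finset.univ.filter fun pr : Fin 4 × Fin 4 => pr.1 < pr.2 := by decide
    have := Finset.le_sup' (fun p : Fin 4 × Fin 4 => |dd a b p.1 p.2|) hmem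
    have h1 : 1 ≤ |dd a b 0 1| := Int.one_le_abs (hd 0 1 (by decide))
    exact le_trans h1 this
  have hHR : (1 : ℝ) ≤ (HC a b : ℝ) := by
    rw [hHC]; exact_mod_cast hmaxD1
  have hHpos : (0 : ℝ) < (HC a b : ℝ) := lt_of_lt_of_le one_pos hHR
  set e₁ : ℝ := (4 * (k : ℝ)) / (8 * (k : ℝ) - 1) with he₁
  set e₂ : ℝ := (4 * (k : ℝ) ^ 2 - 4 * (k : ℝ) + 1) / (4 * (k : ℝ) * (8 * (k : ℝ) - 1)) with he₂
  set X : ℝ := B ^ e₁ / (HC a b : ℝ) ^ e₂ with hXdef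
  have hBpos : (0 : ℝ) < B := by linarith
  have hXpos : 0 < X := div_pos (Real.rpow_pos_of_pos hBpos _) (Real.rpow_pos_of_pos hHpos _)
  have hlogB : 1 ≤ Real.log B := by
    rw [Real.le_log_iff_exp_le hBpos]
    have := Real.exp_one_lt_d9
    linarith
  set L : ℝ := X + 1 + Real.log B with hLdef
  have hL2 : 2 < L := by rw [hLdef]; linarith
  set n : ℕ := ⌊c * L⌋₊ with hndef
  set A' : ℕ := ⌊2 * X⌋₊ with hA'def
  have hcLnn : 0 ≤ c * L := by positivity
  have hn₀n : n₀ ≤ n := by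
    rw [hndef]
    apply Nat.le_floor
    calc (n₀ : ℝ) ≤ (n₀ : ℝ) + 1 := by linarith
      _ ≤ c := hcn0
      _ ≤ c * L := le_mul_of_one_le_right (by linarith) (by linarith)
  have hA'le : (A' : ℝ) ≤ 2 * X := Nat.floor_le (by linarith)
  by_contra hcon
  push_neg at hcon
  -- every prime in (A', n] divides N.natAbs
  have hdvd : ∀ p : ℕ, p.Prime → A' < p → p ≤ n → p ∣ N.natAbs := by
    intro p hp hpA hpn
    by_contra hnd
    have hndZ : ¬ (p : ℤ) ∣ N := by
      intro h
      apply hnd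
      have := Int.natAbs_dvd_natAbs.mpr h
      simpa using this
    have h2X : 2 * X < (p : ℝ) := by
      have h1 : 2 * X < (A' : ℝ) + 1 := Nat.lt_floor_add_one _
      have h2 : (A' : ℝ) + 1 ≤ (p : ℝ) := by exact_mod_cast hpA
      linarith
    have h3 : 2 * B ^ e₁ / (HC a b : ℝ) ^ e₂ < (p : ℝ) := by
      rw [mul_div_assoc, ← hXdef]
      exact h2X
    have h4 : (p : ℝ) ≤ c * L := by
      calc (p : ℝ) ≤ (n : ℝ) := by exact_mod_cast hpn
        _ ≤ c * L := Nat.floor_le hcLnn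
    exact absurd h4 (not_le.mpr (hcon p hp hndZ h3))
  -- primorial n ≤ 4 ^ A' * N.natAbs
  have hsplit : primorial n ≤ 4 ^ A' * N.natAbs := by
    have hprim_eq : primorial n =
        (∏ p ∈ ((Finset.range (n + 1)).filter Nat.Prime).filter (fun p => p ≤ A'), p) *
        (∏ p ∈ ((Finset.range (n + 1)).filter Nat.Prime).filter (fun p => ¬ p ≤ A'), p) :=
      (Finset.prod_filter_mul_prod_filter_not _ _ _).symm
    have h1 : (∏ p ∈ ((Finset.range (n + 1)).filter Nat.Prime).filter (fun p => p ≤ A'), p)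
        ≤ 4 ^ A' := by
      calc (∏ p ∈ ((Finset.range (n + 1)).filter Nat.Prime).filter (fun p => p ≤ A'), p)
          ≤ ∏ p ∈ (Finset.range (A' + 1)).filter Nat.Prime, p := by
            apply Finset.prod_le_prod_of_subset_of_one_le'
            · intro p hp
              simp only [Finset.mem_filter, Finset.mem_range] at hp ⊢
              exact ⟨by omega, hp.1.2⟩
            · intro i hi _
              exact (Finset.mem_filter.mp hi).2.one_lt.le
        _ = primorial A' := rfl
        _ ≤ 4 ^ A' := primorial_le_4_pow A'
    have h2 : (∏ p ∈ ((Finset.range (n + 1)).filter Nat.Prime).filter (fun p => ¬ p ≤ A'), p)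
        ∣ N.natAbs := by
      apply Finset.prod_primes_dvd
      · intro p hp
        exact (Finset.mem_filter.mp (Finset.mem_filter.mp hp).1).2.prime
      · intro p hp
        obtain ⟨hp1, hp2⟩ := Finset.mem_filter.mp hp
        obtain ⟨hp3, hp4⟩ := Finset.mem_filter.mp hp1
        exact hdvd p hp4 (by omega) (by
          have := Finset.mem_range.mp hp3; omega)
    have hNpos : 0 < N.natAbs := Int.natAbs_pos.mpr hNne
    calc primorial n ≤ (4 ^ A') *
        (∏ p ∈ ((Finset.range (n + 1)).filter Nat.Prime).filter (fun p => ¬ p ≤ A'), p) := by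
          rw [hprim_eq]; exact Nat.mul_le_mul_right _ h1
      _ ≤ 4 ^ A' * N.natAbs := Nat.mul_le_mul_left _ (Nat.le_of_dvd hNpos h2)
  -- bound on N.natAbs
  have hsupA : ∀ i, |((a i : ℝ))| ≤ ((Finset.univ.sup fun i => (a i).natAbs : ℕ) : ℝ) := by
    intro i
    rw [← Int.cast_abs, ← Nat.cast_natAbs]
    exact_mod_cast Finset.le_sup (f := fun i => (a i).natAbs) (Finset.mem_univ i)
  have hsupB : ∀ i, |((b i : ℝ))| ≤ ((Finset.univ.sup fun i => (b i).natAbs : ℕ) : ℝ) := by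
    intro i
    rw [← Int.cast_abs, ← Nat.cast_natAbs]
    exact_mod_cast Finset.le_sup (f := fun i => (b i).natAbs) (Finset.mem_univ i)
  set Am : ℝ := ((Finset.univ.sup fun i => (a i).natAbs : ℕ) : ℝ) with hAm
  set Bm : ℝ := ((Finset.univ.sup fun i => (b i).natAbs : ℕ) : ℝ) with hBm
  have hAmnn : 0 ≤ Am := Nat.cast_nonneg _
  have hBmnn : 0 ≤ Bm := Nat.cast_nonneg _
  have hNabs : (N.natAbs : ℝ) ≤ B ^ (965 : ℕ) := by
    have hcard : (Finset.univ.filter fun pr : Fin 4 × Fin 4 => pr.1 < pr.2).card = 6 := by decide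
    have hdb : ∀ pr ∈ Finset.univ.filter fun pr : Fin 4 × Fin 4 => pr.1 < pr.2,
        |((dd a b pr.1 pr.2 : ℤ) : ℝ)| ≤ 2 * (Am * Bm) := by
      intro pr _
      rw [dd]
      push_cast
      calc |(a pr.1 : ℝ) * (b pr.2 : ℝ) - (a pr.2 : ℝ) * (b pr.1 : ℝ)|
          ≤ |(a pr.1 : ℝ) * (b pr.2 : ℝ)| + |(a pr.2 : ℝ) * (b pr.1 : ℝ)| := abs_sub _ _
        _ = |(a pr.1 : ℝ)| * |(b pr.2 : ℝ)| + |(a pr.2 : ℝ)| * |(b pr.1 : ℝ)| := by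
            rw [abs_mul, abs_mul]
        _ ≤ Am * Bm + Am * Bm := by
            apply add_le_add
            · exact mul_le_mul (hsupA _) (hsupB _) (abs_nonneg _) hAmnn
            · exact mul_le_mul (hsupA _) (hsupB _) (abs_nonneg _) hAmnn
        _ = 2 * (Am * Bm) := by ring
    have habsN : (N.natAbs : ℝ) = |(N : ℝ)| := by
      rw [Nat.cast_natAbs, Int.cast_abs]
    have hNval : |(N : ℝ)| = 2 * ∏ pr ∈ Finset.univ.filter
        fun pr : Fin 4 × Fin 4 => pr.1 < pr.2, |((dd a b pr.1 pr.2 : ℤ) : ℝ)| := by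
      rw [hNdef]
      push_cast
      rw [abs_mul, Finset.abs_prod]
      norm_num
    have hprodle : (∏ pr ∈ Finset.univ.filter
        fun pr : Fin 4 × Fin 4 => pr.1 < pr.2, |((dd a b pr.1 pr.2 : ℤ) : ℝ)|)
        ≤ (2 * (Am * Bm)) ^ (6 : ℕ) := by
      calc (∏ pr ∈ Finset.univ.filter
          fun pr : Fin 4 × Fin 4 => pr.1 < pr.2, |((dd a b pr.1 pr.2 : ℤ) : ℝ)|)
          ≤ ∏ _pr ∈ Finset.univ.filter
            fun pr : Fin 4 × Fin 4 => pr.1 < pr.2, (2 * (Am * Bm)) :=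
            Finset.prod_le_prod (fun i _ => abs_nonneg _) hdb
        _ = (2 * (Am * Bm)) ^ (6 : ℕ) := by rw [Finset.prod_const, hcard]
    calc (N.natAbs : ℝ) = |(N : ℝ)| := habsN
      _ = 2 * ∏ pr ∈ Finset.univ.filter
          fun pr : Fin 4 × Fin 4 => pr.1 < pr.2, |((dd a b pr.1 pr.2 : ℤ) : ℝ)| := hNval
      _ ≤ 2 * (2 * (Am * Bm)) ^ (6 : ℕ) := by linarith [hprodle]
      _ = 2 ^ (7 : ℕ) * (Am * Bm) ^ (6 : ℕ) := by ring
      _ ≤ 2 ^ (7 : ℕ) * (B ^ (160 : ℕ)) ^ (6 : ℕ) :=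
          mul_le_mul_of_nonneg_left
            (pow_le_pow_left₀ (mul_nonneg hAmnn hBmnn) hAB 6) (by norm_num)
      _ = 128 * B ^ (960 : ℕ) := by rw [← pow_mul]; norm_num
      _ ≤ B ^ (5 : ℕ) * B ^ (960 : ℕ) := by
          apply mul_le_mul_of_nonneg_right _ (by positivity)
          have h35 : (3:ℝ) ^ (5:ℕ) ≤ B ^ (5:ℕ) := pow_le_pow_left₀ (by norm_num) hB 5
          norm_num at h35 ⊢
          linarith
      _ = B ^ (965 : ℕ) := by rw [← pow_add]
  -- take logs
  have hNabs1 : (1 : ℝ) ≤ (N.natAbs : ℝ) := by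
    exact_mod_cast Nat.one_le_iff_ne_zero.mpr (Int.natAbs_ne_zero.mpr hNne)
  have hlogN : Real.log (N.natAbs : ℝ) ≤ 965 * Real.log B := by
    calc Real.log (N.natAbs : ℝ) ≤ Real.log (B ^ (965 : ℕ)) :=
        Real.log_le_log (by linarith) hNabs
      _ = 965 * Real.log B := by rw [Real.log_pow]; norm_num
  have hθn : (n : ℝ) / 5 ≤ Real.log (primorial n) := hθ n hn₀n
  have hθup : Real.log (primorial n) ≤ (A' : ℝ) * Real.log 4 + Real.log (N.natAbs : ℝ) := by
    have hstep1 : Real.log (primorial n) ≤ Real.log ((4 ^ A' * N.natAbs : ℕ) : ℝ) := by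
      apply Real.log_le_log
      · exact_mod_cast primorial_pos n
      · exact_mod_cast hsplit
    have hstep2 : Real.log ((4 ^ A' * N.natAbs : ℕ) : ℝ) =
        (A' : ℝ) * Real.log 4 + Real.log (N.natAbs : ℝ) := by
      push_cast
      rw [Real.log_mul (by positivity) (by linarith), Real.log_pow]
    linarith
  have hlog4 : Real.log 4 ≤ 3 / 2 := by
    have h := Real.log_two_lt_d9
    have h4 : Real.log 4 = 2 * Real.log 2 := by
      rw [show (4 : ℝ) = 2 ^ 2 by norm_num, Real.log_pow]; push_cast; ring
    rw [h4]; linarith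
  have hlog4nn : 0 ≤ Real.log 4 := Real.log_nonneg (by norm_num)
  have hA'term : (A' : ℝ) * Real.log 4 ≤ 3 * X := by
    have h := mul_le_mul hA'le hlog4 hlog4nn (by linarith : (0:ℝ) ≤ 2 * X)
    linarith
  have hfloor : c * L - 1 ≤ (n : ℝ) := by
    have := Nat.sub_one_lt_floor (c * L)
    linarith
  -- final contradiction
  have hchain : c * L - 1 ≤ 5 * (3 * X + 965 * Real.log B) := by
    have : (n : ℝ) / 5 ≤ 3 * X + 965 * Real.log B := by linarith
    linarith
  have hexp : c * L = c * X + c + c * Real.log B := by rw [hLdef]; ring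
  have h1 : 4900 * X ≤ c * X := mul_le_mul_of_nonneg_right hc49 (le_of_lt hXpos)
  have h2 : 4900 * Real.log B ≤ c * Real.log B :=
    mul_le_mul_of_nonneg_right hc49 (by linarith)
  linarith
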